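/- Let N ≥ 2, ω > 0, and let A be the N×N symmetric tridiagonal matrix with diagonal entries (-1+α, -2+α, ..., -2+α, -1+α) and off-diagonal entries 1 (for any α ∈ ℝ). Then the smallest linear subspace of ℝ^N containing e_1 and e_N and invariant under A is all of ℝ^N. -/

import Mathlib

/-- Kalman-type controllability step for the harmonic chain: the smallest
subspace of ℝ^N containing `e_1`, `e_N` and invariant under the tridiagonal matrix
with diagonal `(-1+α, -2+α, …, -2+α, -1+α)` and off-diagonal entries 1 is all of ℝ^N. -/
theorem stmt5 (N : ℕ) (hN : 2 ≤ N) (ω : ℝ) (hω : 0 < ω) (α : ℝ)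
    (A : Matrix (Fin N) (Fin N) ℝ)
    (hA : ∀ i j : Fin N, A i j =
      if i = j then (if i.1 = 0 ∨ i.1 = N - 1 then -1 + α else -2 + α)
      else (if i.1 + 1 = j.1 ∨ j.1 + 1 = i.1 then 1 else 0))
    (S : Submodule ℝ (Fin N → ℝ))
    (hinv : ∀ x ∈ S, A.mulVec x ∈ S)
    (h1 : Pi.single (⟨0, by omega⟩ : Fin N) (1:ℝ) ∈ S)
    (hN' : Pi.single (⟨N - 1, by omega⟩ : Fin N) (1:ℝ) ∈ S) :
    S = ⊤ := by
  have key : ∀ k, ∀ h : k < N, Pi.single (⟨k, h⟩ : Fin N) (1:ℝ) ∈ S := by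
    intro k
    induction k using Nat.strong_induction_on with
    | _ k ih =>
      match k with
      | 0 => intro h; exact h1
      | 1 =>
        intro h
        have hk : 0 < N := by omega
        have hek : Pi.single (⟨0, hk⟩ : Fin N) (1:ℝ) ∈ S := ih 0 (by omega) hk
        have hAek := hinv _ hek
        have heq : Pi.single (⟨1, h⟩ : Fin N) (1:ℝ)
            = A.mulVec (Pi.single (⟨0, hk⟩ : Fin N) (1:ℝ))
              - (-1 + α) • (Pi.single (⟨0, hk⟩ : Fin N) (1:ℝ) : Fin N → ℝ) := by
          funext i
          simp only [Matrix.mulVec_single, Pi.sub_apply, Pi.smul_apply, smul_eq_mul,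
            Pi.single_apply, hA, Fin.ext_iff, Matrix.col_apply, op_smul_eq_mul]
          split_ifs <;> first | ring1 | (exfalso; omega) | (exfalso; simp_all only [not_or, false_or, or_false]; omega)
        rw [heq]
        exact sub_mem hAek (Submodule.smul_mem S _ hek)
      | (m+2) =>
        intro h
        have hk : m + 1 < N := by omega
        have hm : m < N := by omega
        have hek : Pi.single (⟨m+1, hk⟩ : Fin N) (1:ℝ) ∈ S := ih (m+1) (by omega) hk
        have hem : Pi.single (⟨m, hm⟩ : Fin N) (1:ℝ) ∈ S := ih m (by omega) hm
        have hAek := hinv _ hek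
        have heq : Pi.single (⟨m+2, h⟩ : Fin N) (1:ℝ)
            = A.mulVec (Pi.single (⟨m+1, hk⟩ : Fin N) (1:ℝ))
              - (-2 + α) • (Pi.single (⟨m+1, hk⟩ : Fin N) (1:ℝ) : Fin N → ℝ)
              - (Pi.single (⟨m, hm⟩ : Fin N) (1:ℝ) : Fin N → ℝ) := by
          funext i
          simp only [Matrix.mulVec_single, Pi.sub_apply, Pi.smul_apply, smul_eq_mul,
            Pi.single_apply, hA, Fin.ext_iff, Matrix.col_apply, op_smul_eq_mul]
          split_ifs <;> first | ring1 | (exfalso; omega) | (exfalso; simp_all only [not_or, false_or, or_false]; omega)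
        rw [heq]
        exact sub_mem (sub_mem hAek (Submodule.smul_mem S _ hek)) hem
  rw [Submodule.eq_top_iff']
  intro x
  have hx : x = ∑ i : Fin N, Pi.single i (x i) := (Finset.univ_sum_single x).symm
  rw [hx]
  refine Submodule.sum_mem S fun i _ => ?_
  have hs : Pi.single i (x i) = x i • (Pi.single i (1:ℝ) : Fin N → ℝ) := by
    funext j; simp [Pi.single_apply]
  rw [hs]
  exact Submodule.smul_mem S _ (by simpa using key i.1 i.2)
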